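/- For every p ∈ [0,1] and θ ∈ [0, π), the mixed state ρ(p,θ) = p|φ₁⟩⟨φ₁| + (1−p)|φ₂⟩⟨φ₂| (with |φ₁⟩ = cos θ|00⟩ + sin θ|11⟩, |φ₂⟩ = sin θ|00⟩ + cos θ|11⟩) satisfies tr(ρ(p,θ) S_{θ+}) = 2√(1 + sin²2θ), where S_{θ+} = (2/√(1+sin²2θ))(sin 2θ · σ_x⊗σ_x + σ_z⊗σ_z). Hence N(ρ(p,θ)) = 2√(1 + C²) with C = |sin 2θ| the concurrence, i.e., these states saturate the bound N ≤ 2√(1+C²). -/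

import Mathlib

open Matrix Complex
open scoped Kronecker ComplexOrder

/-- The Pauli matrices `σ₁ = X`, `σ₂ = Y`, `σ₃ = Z`. -/
noncomputable def pauli : Fin 3 → Matrix (Fin 2) (Fin 2) ℂ
  | 0 => !![0, 1; 1, 0]
  | 1 => !![0, -Complex.I; Complex.I, 0]
  | 2 => !![1, 0; 0, -1]

/-- The qubit observable `v·σ` associated to a vector `v ∈ ℝ³`. -/
noncomputable def obsOf (v : Fin 3 → ℝ) : Matrix (Fin 2) (Fin 2) ℂ :=
  ∑ i, (v i : ℂ) • pauli i

/-- A CHSH operator `S = A⊗(B+B') + A'⊗(B−B')` with `A, A', B, B'` of the form `v·σ`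
for unit vectors `v ∈ ℝ³`. -/
def IsCHSH (S : Matrix (Fin 2 × Fin 2) (Fin 2 × Fin 2) ℂ) : Prop :=
  ∃ a a' b b' : Fin 3 → ℝ,
    (∑ i, a i ^ 2 = 1) ∧ (∑ i, a' i ^ 2 = 1) ∧
    (∑ i, b i ^ 2 = 1) ∧ (∑ i, b' i ^ 2 = 1) ∧
    S = obsOf a ⊗ₖ (obsOf b + obsOf b') + obsOf a' ⊗ₖ (obsOf b - obsOf b')

/-- The nonlocality `N(ρ) = sup_S tr(ρS)` over CHSH operators `S`. -/
noncomputable def Nloc (ρ : Matrix (Fin 2 × Fin 2) (Fin 2 × Fin 2) ℂ) : ℝ :=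
  sSup {x : ℝ | ∃ S, IsCHSH S ∧ x = ((ρ * S).trace).re}

open scoped ComplexConjugate


/- ### Auxiliary lemmas -/

lemma obsOf_eq (v : Fin 3 → ℝ) : obsOf v =
    !![(v 2 : ℂ), (v 0 : ℂ) - (v 1 : ℂ) * Complex.I;
       (v 0 : ℂ) + (v 1 : ℂ) * Complex.I, -(v 2 : ℂ)] := by
  unfold obsOf
  ext i j
  fin_cases i <;> fin_cases j <;>
    simp [pauli, Fin.sum_univ_three] <;> ring

lemma obsOf_add (b b' : Fin 3 → ℝ) :
    obsOf b + obsOf b' = obsOf (fun i => b i + b' i) := by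
  rw [obsOf_eq, obsOf_eq, obsOf_eq]
  ext i j
  fin_cases i <;> fin_cases j <;> (simp; try (push_cast; ring))

lemma obsOf_sub (b b' : Fin 3 → ℝ) :
    obsOf b - obsOf b' = obsOf (fun i => b i - b' i) := by
  rw [obsOf_eq, obsOf_eq, obsOf_eq]
  ext i j
  fin_cases i <;> fin_cases j <;> (simp; try (push_cast; ring))

lemma obsOf_e0 : obsOf ![1,0,0] = pauli 0 := by
  rw [obsOf_eq]
  ext i j
  fin_cases i <;> fin_cases j <;> simp [pauli]

lemma obsOf_e2 : obsOf ![0,0,1] = pauli 2 := by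
  rw [obsOf_eq]
  ext i j
  fin_cases i <;> fin_cases j <;> simp [pauli]

set_option maxHeartbeats 1000000 in
lemma traceXY (p θ : ℝ) (x y : Fin 3 → ℝ) :
    Matrix.trace
    (((p : ℂ) • Matrix.vecMulVec (fun q : Fin 2 × Fin 2 => if q = (0, 0) then (Real.cos θ : ℂ)
      else if q = (1, 1) then (Real.sin θ : ℂ) else 0) (fun q => conj (if q = (0, 0) then (Real.cos θ : ℂ)
      else if q = (1, 1) then (Real.sin θ : ℂ) else 0)) +
      ((1 - p : ℝ) : ℂ) • Matrix.vecMulVec (fun q : Fin 2 × Fin 2 => if q = (0, 0) then (Real.sin θ : ℂ)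
      else if q = (1, 1) then (Real.cos θ : ℂ) else 0) (fun q => conj (if q = (0, 0) then (Real.sin θ : ℂ)
      else if q = (1, 1) then (Real.cos θ : ℂ) else 0))) *
      (obsOf x ⊗ₖ obsOf y))
    = ((Real.sin (2 * θ) * (x 0 * y 0 - x 1 * y 1) + x 2 * y 2 : ℝ) : ℂ) := by
  rw [obsOf_eq, obsOf_eq]
  simp only [Matrix.trace, Matrix.diag, Matrix.mul_apply, Fintype.sum_prod_type,
    Fin.sum_univ_two, Matrix.add_apply, Matrix.smul_apply,
    Matrix.vecMulVec_apply, Matrix.kroneckerMap_apply, Matrix.cons_val', Matrix.cons_val_zero,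
    Matrix.cons_val_one, Matrix.head_cons, Matrix.head_fin_const, Matrix.of_apply,
    Matrix.empty_val', Matrix.cons_val_fin_one]
  simp only [Prod.mk.injEq, Fin.isValue, show ((0:Fin 2) = 1) = False by simp,
    show ((1:Fin 2) = 0) = False by simp,
    if_true, if_false, and_true, and_false, true_and, false_and, if_pos rfl, and_self]
  simp only [RingHom.coe_coe, Complex.conj_ofReal, Real.sin_two_mul]
  have hcs : Complex.cos (θ:ℂ) ^ 2 + Complex.sin (θ:ℂ) ^ 2 = 1 := Complex.cos_sq_add_sin_sq _
  simp only [smul_eq_mul, map_zero, mul_zero, zero_mul, sub_zero, add_zero, zero_add]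
  push_cast
  ring_nf
  simp only [Complex.I_sq]
  linear_combination ((x 2 : ℂ) * (y 2 : ℂ) * (p : ℂ) + (x 2 : ℂ) * (y 2 : ℂ) * (1 - (p:ℂ))) * hcs

lemma dot_le_sqrt (a0 a1 a2 w0 w1 w2 : ℝ) (ha : a0^2+a1^2+a2^2 = 1) :
    a0*w0+a1*w1+a2*w2 ≤ Real.sqrt (w0^2+w1^2+w2^2) := by
  have h1 : (a0*w0+a1*w1+a2*w2)^2 ≤ w0^2+w1^2+w2^2 := by
    nlinarith [sq_nonneg (a0*w1-a1*w0), sq_nonneg (a0*w2-a2*w0), sq_nonneg (a1*w2-a2*w1)]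
  calc a0*w0+a1*w1+a2*w2 ≤ |a0*w0+a1*w1+a2*w2| := le_abs_self _
    _ = Real.sqrt ((a0*w0+a1*w1+a2*w2)^2) := (Real.sqrt_sq_eq_abs _).symm
    _ ≤ Real.sqrt (w0^2+w1^2+w2^2) := Real.sqrt_le_sqrt h1

lemma cs2 (a b c d : ℝ) (ha : 0 ≤ a) (hb : 0 ≤ b) (hc : 0 ≤ c) (hd : 0 ≤ d) :
    Real.sqrt (a*c) + Real.sqrt (b*d) ≤ Real.sqrt ((a+b)*(c+d)) := by
  rw [Real.sqrt_mul ha, Real.sqrt_mul hb, Real.sqrt_mul (by linarith)]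
  have h1 := Real.sq_sqrt ha
  have h2 := Real.sq_sqrt hb
  have h3 := Real.sq_sqrt hc
  have h4 := Real.sq_sqrt hd
  have h5 := Real.sqrt_nonneg a
  have h6 := Real.sqrt_nonneg b
  have h7 := Real.sqrt_nonneg c
  have h8 := Real.sqrt_nonneg d
  have key : (Real.sqrt a * Real.sqrt c + Real.sqrt b * Real.sqrt d)^2 ≤ (a+b)*(c+d) := by
    nlinarith [sq_nonneg (Real.sqrt a * Real.sqrt d - Real.sqrt b * Real.sqrt c)]
  calc Real.sqrt a * Real.sqrt c + Real.sqrt b * Real.sqrt d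
      = |Real.sqrt a * Real.sqrt c + Real.sqrt b * Real.sqrt d| := by
        rw [_root_.abs_of_nonneg]; positivity
    _ = Real.sqrt ((Real.sqrt a * Real.sqrt c + Real.sqrt b * Real.sqrt d)^2) :=
        (Real.sqrt_sq_eq_abs _).symm
    _ ≤ Real.sqrt ((a+b)*(c+d)) := Real.sqrt_le_sqrt key
    _ = Real.sqrt (a+b) * Real.sqrt (c+d) := Real.sqrt_mul (by linarith) _

set_option maxHeartbeats 1000000 in
lemma main_bound (s u0 u1 u2 v0 v1 v2 : ℝ) (hs : s^2 ≤ 1)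
    (horth : u0*v0+u1*v1+u2*v2 = 0)
    (hsum : (u0^2+u1^2+u2^2) + (v0^2+v1^2+v2^2) = 4) :
    Real.sqrt (s^2*u0^2+s^2*u1^2+u2^2) + Real.sqrt (s^2*v0^2+s^2*v1^2+v2^2)
      ≤ 2*Real.sqrt (1+s^2) := by
  set U := u0^2+u1^2+u2^2 with hU
  set V := v0^2+v1^2+v2^2 with hV
  have hU0 : 0 ≤ U := by positivity
  have hV0 : 0 ≤ V := by positivity
  have hs1 : 1 ≤ Real.sqrt (1+s^2) := by
    have h := Real.sqrt_le_sqrt (show (1:ℝ) ≤ 1+s^2 by nlinarith [sq_nonneg s])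
    rwa [Real.sqrt_one] at h
  have hXU : s^2*u0^2+s^2*u1^2+u2^2 = s^2*U + (1-s^2)*u2^2 := by rw [hU]; ring
  have hYV : s^2*v0^2+s^2*v1^2+v2^2 = s^2*V + (1-s^2)*v2^2 := by rw [hV]; ring
  rcases eq_or_lt_of_le hU0 with h0 | hUpos
  · have hu0 : u0 = 0 := pow_eq_zero_iff two_ne_zero |>.mp
      (by linarith [sq_nonneg u0, sq_nonneg u1, sq_nonneg u2])
    have hu1 : u1 = 0 := pow_eq_zero_iff two_ne_zero |>.mp
      (by linarith [sq_nonneg u0, sq_nonneg u1, sq_nonneg u2])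
    have hu2 : u2 = 0 := pow_eq_zero_iff two_ne_zero |>.mp
      (by linarith [sq_nonneg u0, sq_nonneg u1, sq_nonneg u2])
    rw [hu0, hu1, hu2]
    have hYle : s^2*v0^2+s^2*v1^2+v2^2 ≤ 4 := by nlinarith [sq_nonneg v0, sq_nonneg v1]
    have : Real.sqrt (s^2*v0^2+s^2*v1^2+v2^2) ≤ 2 := by
      rw [show (2:ℝ) = Real.sqrt 4 by rw [show (4:ℝ) = 2^2 by norm_num, Real.sqrt_sq]; norm_num]
      exact Real.sqrt_le_sqrt hYle
    calc Real.sqrt (s^2*0^2+s^2*0^2+0^2) + Real.sqrt (s^2*v0^2+s^2*v1^2+v2^2)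
        = Real.sqrt (s^2*v0^2+s^2*v1^2+v2^2) := by norm_num
      _ ≤ 2 := this
      _ ≤ 2*Real.sqrt (1+s^2) := by linarith
  rcases eq_or_lt_of_le hV0 with h0 | hVpos
  · have hv0 : v0 = 0 := pow_eq_zero_iff two_ne_zero |>.mp
      (by linarith [sq_nonneg v0, sq_nonneg v1, sq_nonneg v2])
    have hv1 : v1 = 0 := pow_eq_zero_iff two_ne_zero |>.mp
      (by linarith [sq_nonneg v0, sq_nonneg v1, sq_nonneg v2])
    have hv2 : v2 = 0 := pow_eq_zero_iff two_ne_zero |>.mp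
      (by linarith [sq_nonneg v0, sq_nonneg v1, sq_nonneg v2])
    rw [hv0, hv1, hv2]
    have hXle : s^2*u0^2+s^2*u1^2+u2^2 ≤ 4 := by nlinarith [sq_nonneg u0, sq_nonneg u1]
    have : Real.sqrt (s^2*u0^2+s^2*u1^2+u2^2) ≤ 2 := by
      rw [show (2:ℝ) = Real.sqrt 4 by rw [show (4:ℝ) = 2^2 by norm_num, Real.sqrt_sq]; norm_num]
      exact Real.sqrt_le_sqrt hXle
    calc Real.sqrt (s^2*u0^2+s^2*u1^2+u2^2) + Real.sqrt (s^2*0^2+s^2*0^2+0^2)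
        = Real.sqrt (s^2*u0^2+s^2*u1^2+u2^2) := by norm_num
      _ ≤ 2 := this
      _ ≤ 2*Real.sqrt (1+s^2) := by linarith
  have bessel : u2^2*V + v2^2*U ≤ U*V := by
    have h2 : (u0*v0+u1*v1)^2 = (u2*v2)^2 := by
      have h3 : u0*v0+u1*v1 = -(u2*v2) := by linarith
      rw [h3]; ring
    rw [hU, hV]
    nlinarith [sq_nonneg (u0*v1-u1*v0), h2]
  set cX := s^2 + (1-s^2)*(u2^2/U) with hcX
  set cY := s^2 + (1-s^2)*(v2^2/V) with hcY
  have hcX0 : 0 ≤ cX := by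
    have h1 : 0 ≤ u2^2/U := by positivity
    have h2 := mul_nonneg (show (0:ℝ) ≤ 1-s^2 by linarith) h1
    rw [hcX]; linarith [sq_nonneg s]
  have hcY0 : 0 ≤ cY := by
    have h1 : 0 ≤ v2^2/V := by positivity
    have h2 := mul_nonneg (show (0:ℝ) ≤ 1-s^2 by linarith) h1
    rw [hcY]; linarith [sq_nonneg s]
  have hXeq : s^2*u0^2+s^2*u1^2+u2^2 = U*cX := by
    rw [hcX]; field_simp; rw [hU]; ring
  have hYeq : s^2*v0^2+s^2*v1^2+v2^2 = V*cY := by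
    rw [hcY]; field_simp; rw [hV]; ring
  rw [hXeq, hYeq]
  have step1 : Real.sqrt (U*cX) + Real.sqrt (V*cY) ≤ Real.sqrt ((U+V)*(cX+cY)) :=
    cs2 U V cX cY hU0 hV0 hcX0 hcY0
  have hfrac : u2^2/U + v2^2/V ≤ 1 := by
    rw [div_add_div _ _ (ne_of_gt hUpos) (ne_of_gt hVpos), div_le_one (by positivity)]
    nlinarith
  have step2 : (U+V)*(cX+cY) ≤ 4*(1+s^2) := by
    have : cX + cY ≤ 1 + s^2 := by
      rw [hcX, hcY]; nlinarith
    nlinarith [this]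
  calc Real.sqrt (U*cX) + Real.sqrt (V*cY) ≤ Real.sqrt ((U+V)*(cX+cY)) := step1
    _ ≤ Real.sqrt (4*(1+s^2)) := Real.sqrt_le_sqrt step2
    _ = 2*Real.sqrt (1+s^2) := by
        rw [Real.sqrt_mul (by norm_num), show (4:ℝ) = 2^2 by norm_num, Real.sqrt_sq (by norm_num)]

set_option maxHeartbeats 1000000 in
/-- The states `ρ(p,θ) = p|φ₁⟩⟨φ₁| + (1−p)|φ₂⟩⟨φ₂|` saturate the
Verstraete–Wolf bound: `tr(ρ(p,θ) S_{θ+}) = 2√(1+sin²2θ)`, and hence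
`N(ρ(p,θ)) = 2√(1+C²)` with `C = |sin 2θ|` the concurrence. -/
theorem stmt17 (p θ : ℝ) (hp : p ∈ Set.Icc (0 : ℝ) 1) (hθ : θ ∈ Set.Ico 0 Real.pi)
    (φ₁ φ₂ : Fin 2 × Fin 2 → ℂ)
    (hφ₁ : φ₁ = fun q => if q = (0, 0) then (Real.cos θ : ℂ)
      else if q = (1, 1) then (Real.sin θ : ℂ) else 0)
    (hφ₂ : φ₂ = fun q => if q = (0, 0) then (Real.sin θ : ℂ)
      else if q = (1, 1) then (Real.cos θ : ℂ) else 0)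
    (ρ : Matrix (Fin 2 × Fin 2) (Fin 2 × Fin 2) ℂ)
    (hρ : ρ = (p : ℂ) • Matrix.vecMulVec φ₁ (fun q => conj (φ₁ q)) +
      ((1 - p : ℝ) : ℂ) • Matrix.vecMulVec φ₂ (fun q => conj (φ₂ q)))
    (S : Matrix (Fin 2 × Fin 2) (Fin 2 × Fin 2) ℂ)
    (hS : S = ((2 / Real.sqrt (1 + Real.sin (2 * θ) ^ 2) : ℝ) : ℂ) •
      (((Real.sin (2 * θ) : ℝ) : ℂ) • (pauli 0 ⊗ₖ pauli 0) + pauli 2 ⊗ₖ pauli 2)) :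
    ((ρ * S).trace).re = 2 * Real.sqrt (1 + Real.sin (2 * θ) ^ 2) ∧
    Nloc ρ = 2 * Real.sqrt (1 + |Real.sin (2 * θ)| ^ 2) := by
  subst hφ₁; subst hφ₂; subst hρ; subst hS
  have hs2 : Real.sin (2*θ)^2 ≤ 1 := Real.sin_sq_le_one _
  have hwpos : (0:ℝ) < 1 + Real.sin (2*θ)^2 := by positivity
  have hsp : 0 < Real.sqrt (1 + Real.sin (2*θ)^2) := Real.sqrt_pos.mpr hwpos
  -- trace against the two relevant Pauli products
  have h00 : Matrix.trace
      (((p : ℂ) • Matrix.vecMulVec (fun q : Fin 2 × Fin 2 => if q = (0, 0) then (Real.cos θ : ℂ)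
      else if q = (1, 1) then (Real.sin θ : ℂ) else 0) (fun q => conj (if q = (0, 0) then (Real.cos θ : ℂ)
      else if q = (1, 1) then (Real.sin θ : ℂ) else 0)) +
      ((1 - p : ℝ) : ℂ) • Matrix.vecMulVec (fun q : Fin 2 × Fin 2 => if q = (0, 0) then (Real.sin θ : ℂ)
      else if q = (1, 1) then (Real.cos θ : ℂ) else 0) (fun q => conj (if q = (0, 0) then (Real.sin θ : ℂ)
      else if q = (1, 1) then (Real.cos θ : ℂ) else 0))) *
      (pauli 0 ⊗ₖ pauli 0)) = ((Real.sin (2 * θ) : ℝ) : ℂ) := by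
    rw [← obsOf_e0, traceXY]
    norm_num [Matrix.cons_val_two, Matrix.tail_cons, Matrix.head_cons]
  have h22 : Matrix.trace
      (((p : ℂ) • Matrix.vecMulVec (fun q : Fin 2 × Fin 2 => if q = (0, 0) then (Real.cos θ : ℂ)
      else if q = (1, 1) then (Real.sin θ : ℂ) else 0) (fun q => conj (if q = (0, 0) then (Real.cos θ : ℂ)
      else if q = (1, 1) then (Real.sin θ : ℂ) else 0)) +
      ((1 - p : ℝ) : ℂ) • Matrix.vecMulVec (fun q : Fin 2 × Fin 2 => if q = (0, 0) then (Real.sin θ : ℂ)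
      else if q = (1, 1) then (Real.cos θ : ℂ) else 0) (fun q => conj (if q = (0, 0) then (Real.sin θ : ℂ)
      else if q = (1, 1) then (Real.cos θ : ℂ) else 0))) *
      (pauli 2 ⊗ₖ pauli 2)) = 1 := by
    rw [← obsOf_e2, traceXY]
    norm_num [Matrix.cons_val_two, Matrix.tail_cons, Matrix.head_cons]
  have hreal : (2 / Real.sqrt (1 + Real.sin (2*θ)^2)) *
      (Real.sin (2*θ) * Real.sin (2*θ) + 1) = 2 * Real.sqrt (1 + Real.sin (2*θ)^2) := by
    rw [show Real.sin (2*θ) * Real.sin (2*θ) + 1 = 1 + Real.sin (2*θ)^2 by ring,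
      div_mul_eq_mul_div, mul_div_assoc, Real.div_sqrt]
  have part1 : ((((p : ℂ) • Matrix.vecMulVec (fun q : Fin 2 × Fin 2 => if q = (0, 0) then (Real.cos θ : ℂ)
      else if q = (1, 1) then (Real.sin θ : ℂ) else 0) (fun q => conj (if q = (0, 0) then (Real.cos θ : ℂ)
      else if q = (1, 1) then (Real.sin θ : ℂ) else 0)) +
      ((1 - p : ℝ) : ℂ) • Matrix.vecMulVec (fun q : Fin 2 × Fin 2 => if q = (0, 0) then (Real.sin θ : ℂ)
      else if q = (1, 1) then (Real.cos θ : ℂ) else 0) (fun q => conj (if q = (0, 0) then (Real.sin θ : ℂ)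
      else if q = (1, 1) then (Real.cos θ : ℂ) else 0))) *
      (((2 / Real.sqrt (1 + Real.sin (2 * θ) ^ 2) : ℝ) : ℂ) •
      (((Real.sin (2 * θ) : ℝ) : ℂ) • (pauli 0 ⊗ₖ pauli 0) + pauli 2 ⊗ₖ pauli 2))).trace).re
      = 2 * Real.sqrt (1 + Real.sin (2 * θ) ^ 2) := by
    rw [Matrix.mul_smul, Matrix.trace_smul, Matrix.mul_add, Matrix.trace_add,
      Matrix.mul_smul, Matrix.trace_smul, h00, h22]
    have : ((2 / Real.sqrt (1 + Real.sin (2 * θ) ^ 2) : ℝ) : ℂ) •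
        (((Real.sin (2 * θ) : ℝ) : ℂ) • ((Real.sin (2 * θ) : ℝ) : ℂ) + 1)
        = ((2 * Real.sqrt (1 + Real.sin (2 * θ) ^ 2) : ℝ) : ℂ) := by
      rw [smul_eq_mul, smul_eq_mul, ← hreal]
      push_cast
      ring
    rw [this, Complex.ofReal_re]
  have hBp : obsOf ![Real.sin (2*θ)/Real.sqrt (1+Real.sin (2*θ)^2), 0,
        1/Real.sqrt (1+Real.sin (2*θ)^2)] +
      obsOf ![-(Real.sin (2*θ)/Real.sqrt (1+Real.sin (2*θ)^2)), 0,
        1/Real.sqrt (1+Real.sin (2*θ)^2)] =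
      ((2/Real.sqrt (1+Real.sin (2*θ)^2) : ℝ) : ℂ) • pauli 2 := by
    rw [obsOf_add, obsOf_eq]
    ext i j
    fin_cases i <;> fin_cases j <;> (simp [pauli]; try (push_cast; ring))
  have hBm : obsOf ![Real.sin (2*θ)/Real.sqrt (1+Real.sin (2*θ)^2), 0,
        1/Real.sqrt (1+Real.sin (2*θ)^2)] -
      obsOf ![-(Real.sin (2*θ)/Real.sqrt (1+Real.sin (2*θ)^2)), 0,
        1/Real.sqrt (1+Real.sin (2*θ)^2)] =
      ((2*Real.sin (2*θ)/Real.sqrt (1+Real.sin (2*θ)^2) : ℝ) : ℂ) • pauli 0 := by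
    rw [obsOf_sub, obsOf_eq]
    ext i j
    fin_cases i <;> fin_cases j <;> (simp [pauli]; try (push_cast; ring))
  have hchsh : IsCHSH (((2 / Real.sqrt (1 + Real.sin (2 * θ) ^ 2) : ℝ) : ℂ) •
      (((Real.sin (2 * θ) : ℝ) : ℂ) • (pauli 0 ⊗ₖ pauli 0) + pauli 2 ⊗ₖ pauli 2)) := by
    refine ⟨![0,0,1], ![1,0,0],
      ![Real.sin (2*θ)/Real.sqrt (1+Real.sin (2*θ)^2), 0, 1/Real.sqrt (1+Real.sin (2*θ)^2)],
      ![-(Real.sin (2*θ)/Real.sqrt (1+Real.sin (2*θ)^2)), 0, 1/Real.sqrt (1+Real.sin (2*θ)^2)],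
      ?_, ?_, ?_, ?_, ?_⟩
    · simp [Fin.sum_univ_three]
    · simp [Fin.sum_univ_three]
    · rw [Fin.sum_univ_three]
      simp only [Matrix.cons_val_zero, Matrix.cons_val_one, Matrix.head_cons,
        Matrix.cons_val_two, Matrix.tail_cons]
      rw [div_pow, div_pow, Real.sq_sqrt hwpos.le]
      field_simp
      ring
    · rw [Fin.sum_univ_three]
      simp only [Matrix.cons_val_zero, Matrix.cons_val_one, Matrix.head_cons,
        Matrix.cons_val_two, Matrix.tail_cons]
      rw [neg_pow, div_pow, div_pow, Real.sq_sqrt hwpos.le]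
      field_simp
      ring
    · rw [hBp, hBm, obsOf_e2, obsOf_e0, Matrix.kronecker_smul, Matrix.kronecker_smul,
        smul_add, smul_smul]
      have e1 : ((2 / Real.sqrt (1 + Real.sin (2 * θ) ^ 2) : ℝ) : ℂ) * ((Real.sin (2*θ) : ℝ) : ℂ)
          = ((2 * Real.sin (2*θ) / Real.sqrt (1 + Real.sin (2*θ)^2) : ℝ) : ℂ) := by
        push_cast; ring
      rw [e1]
      exact add_comm _ _
  have hub : ∀ x ∈ {x : ℝ | ∃ S, IsCHSH S ∧ x =
      ((((p : ℂ) • Matrix.vecMulVec (fun q : Fin 2 × Fin 2 => if q = (0, 0) then (Real.cos θ : ℂ)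
      else if q = (1, 1) then (Real.sin θ : ℂ) else 0) (fun q => conj (if q = (0, 0) then (Real.cos θ : ℂ)
      else if q = (1, 1) then (Real.sin θ : ℂ) else 0)) +
      ((1 - p : ℝ) : ℂ) • Matrix.vecMulVec (fun q : Fin 2 × Fin 2 => if q = (0, 0) then (Real.sin θ : ℂ)
      else if q = (1, 1) then (Real.cos θ : ℂ) else 0) (fun q => conj (if q = (0, 0) then (Real.sin θ : ℂ)
      else if q = (1, 1) then (Real.cos θ : ℂ) else 0))) * S).trace).re},
      x ≤ 2 * Real.sqrt (1 + Real.sin (2*θ)^2) := by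
    rintro x ⟨S', ⟨a, a', b, b', ha, ha', hb, hb', rfl⟩, rfl⟩
    rw [Fin.sum_univ_three] at ha ha' hb hb'
    rw [obsOf_add, obsOf_sub, Matrix.mul_add, Matrix.trace_add, traceXY, traceXY,
      ← Complex.ofReal_add, Complex.ofReal_re]
    have d1 := dot_le_sqrt (a 0) (a 1) (a 2) (Real.sin (2*θ)*(b 0 + b' 0))
      (-(Real.sin (2*θ)*(b 1 + b' 1))) (b 2 + b' 2) ha
    have d2 := dot_le_sqrt (a' 0) (a' 1) (a' 2) (Real.sin (2*θ)*(b 0 - b' 0))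
      (-(Real.sin (2*θ)*(b 1 - b' 1))) (b 2 - b' 2) ha'
    have e1 : (Real.sin (2*θ)*(b 0 + b' 0))^2 + (-(Real.sin (2*θ)*(b 1 + b' 1)))^2
        + (b 2 + b' 2)^2 = Real.sin (2*θ)^2*(b 0 + b' 0)^2 + Real.sin (2*θ)^2*(b 1 + b' 1)^2
        + (b 2 + b' 2)^2 := by ring
    have e2 : (Real.sin (2*θ)*(b 0 - b' 0))^2 + (-(Real.sin (2*θ)*(b 1 - b' 1)))^2
        + (b 2 - b' 2)^2 = Real.sin (2*θ)^2*(b 0 - b' 0)^2 + Real.sin (2*θ)^2*(b 1 - b' 1)^2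
        + (b 2 - b' 2)^2 := by ring
    rw [e1] at d1
    rw [e2] at d2
    have m := main_bound (Real.sin (2*θ)) (b 0 + b' 0) (b 1 + b' 1) (b 2 + b' 2)
      (b 0 - b' 0) (b 1 - b' 1) (b 2 - b' 2) hs2
      (by linear_combination hb - hb')
      (by linear_combination 2*hb + 2*hb')
    try simp only [Pi.add_apply, Pi.sub_apply]
    linarith [d1, d2, m]
  refine ⟨part1, ?_⟩
  rw [_root_.sq_abs]
  have hmem : 2 * Real.sqrt (1 + Real.sin (2*θ)^2) ∈ {x : ℝ | ∃ S, IsCHSH S ∧ x =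
      ((((p : ℂ) • Matrix.vecMulVec (fun q : Fin 2 × Fin 2 => if q = (0, 0) then (Real.cos θ : ℂ)
      else if q = (1, 1) then (Real.sin θ : ℂ) else 0) (fun q => conj (if q = (0, 0) then (Real.cos θ : ℂ)
      else if q = (1, 1) then (Real.sin θ : ℂ) else 0)) +
      ((1 - p : ℝ) : ℂ) • Matrix.vecMulVec (fun q : Fin 2 × Fin 2 => if q = (0, 0) then (Real.sin θ : ℂ)
      else if q = (1, 1) then (Real.cos θ : ℂ) else 0) (fun q => conj (if q = (0, 0) then (Real.sin θ : ℂ)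
      else if q = (1, 1) then (Real.cos θ : ℂ) else 0))) * S).trace).re} :=
    ⟨_, hchsh, part1.symm⟩
  unfold Nloc
  exact le_antisymm (csSup_le ⟨_, hmem⟩ hub)
    (le_csSup ⟨2 * Real.sqrt (1 + Real.sin (2*θ)^2), hub⟩ hmem)
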